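/- arXiv:2001.01552 — 3 statements merged into one kernel-verified Lean document; each statement's English description precedes it below -/
import Mathlib

section
/- For all real numbers c, k, s ≥ 1 and all positive integers d, there exists a real number δ such that the following holds. Let G be a finite graph, ≺ a linear ordering of V(G), and ι, ω functions assigning shapes in ℝ^d to vertices of G, satisfying: (a) for every v ∈ V(G), ω(v) is convex and ι(v) ⊆ ω(v); (b) for every x ∈ ℝ^d, there exist at most c vertices v with x ∈ ι(v); (c) for all u, v ∈ V(G) with u ≺ v, ω(v) ≤_k ω(u) and ω(v) ⊑_s ι(u); (d) for every edge uv ∈ E(G) with u ≺ v, ω(v) ∩ ι(u) ≠ ∅. Then col_{≺,r}(G) ≤ δ · r^d for every positive integer r. -/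
open MeasureTheory Set Pointwise Metric Function
open scoped RealInnerProductSpace ENNReal

noncomputable section

/-- `ℝ^d` as a Euclidean space. -/
abbrev Euc (d : ℕ) := EuclideanSpace ℝ (Fin d)

/-- A shape: a compact set that is non-degenerate, i.e. not contained in a proper
affine subspace. -/
def IsShape {d : ℕ} (B : Set (Euc d)) : Prop :=
  IsCompact B ∧ affineSpan ℝ B = ⊤

/-- `B₁ ⊑ₛ B₂`: for every `x ∈ B₂` there is a translate `B₁'` of `B₁` with `x ∈ B₁'`
and `vol (B₁' ∩ B₂) ≥ vol B₁ / s`. -/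
def SqIn {d : ℕ} (s : ℝ) (B₁ B₂ : Set (Euc d)) : Prop :=
  ∀ x ∈ B₂, ∃ v : Euc d, x ∈ v +ᵥ B₁ ∧
    volume B₁ / ENNReal.ofReal s ≤ volume ((v +ᵥ B₁) ∩ B₂)

/-- `B₁` and `B₂` are `⊑ₛ`-comparable. -/
def SqComparable {d : ℕ} (s : ℝ) (B₁ B₂ : Set (Euc d)) : Prop :=
  SqIn s B₁ B₂ ∨ SqIn s B₂ B₁

/-- `B₁ ≤ₖ B₂`: some translate of `B₁` is contained in `k • B₂`. -/
def LeK {d : ℕ} (k : ℝ) (B₁ B₂ : Set (Euc d)) : Prop :=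
  ∃ v : Euc d, v +ᵥ B₁ ⊆ k • B₂

/-- `B₁ ≤_{k,s} B₂`: for every `x ∈ k • B₂` there are a translate `B₁'` of `B₁` and a
translate `B₁''` of `s • B₁` with `x ∈ B₁''` and `B₁' ⊆ B₁'' ∩ k • B₂`. -/
def LeKS {d : ℕ} (k s : ℝ) (B₁ B₂ : Set (Euc d)) : Prop :=
  ∀ x ∈ k • B₂, ∃ v w : Euc d,
    x ∈ w +ᵥ (s • B₁) ∧ v +ᵥ B₁ ⊆ (w +ᵥ (s • B₁)) ∩ (k • B₂)

/-- An intersection representation of a graph in `ℝ^d`. -/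
def IsIntersectionRep {V : Type*} {d : ℕ} (G : SimpleGraph V) (φ : V → Set (Euc d)) : Prop :=
  (∀ v, (φ v).Nonempty) ∧ ∀ u v : V, u ≠ v → ((φ u ∩ φ v).Nonempty ↔ G.Adj u v)

/-- A representation is `c`-thin if every point lies in at most `c` of the sets. -/
def IsThin {V : Type*} {d : ℕ} (c : ℝ) (φ : V → Set (Euc d)) : Prop :=
  ∀ x : Euc d, ({v : V | x ∈ φ v}.ncard : ℝ) ≤ c

/-- A `(c,⊑ₛ)`-tame representation. -/
def IsTame {V : Type*} {d : ℕ} (c s : ℝ) (G : SimpleGraph V) (φ : V → Set (Euc d)) : Prop :=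
  IsIntersectionRep G φ ∧ IsThin c φ ∧
    (∀ v, Convex ℝ (φ v) ∧ IsShape (φ v)) ∧
    ∀ u v : V, SqComparable s (φ u) (φ v)

/-- An `S`-shaped representation: each vertex is assigned a translate of a shape in `S`. -/
def IsSShaped {V : Type*} {d : ℕ} (S : Set (Set (Euc d))) (φ : V → Set (Euc d)) : Prop :=
  ∀ v, ∃ B ∈ S, ∃ t : Euc d, φ v = t +ᵥ B

/-- `X` is a balanced separator: every component of `G - X` has at most `(2/3)|V(G)|`
vertices. -/
def IsBalancedSeparator {V : Type*} [Fintype V] (G : SimpleGraph V) (X : Set V) : Prop :=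
  ∀ C : (G.induce Xᶜ).ConnectedComponent,
    (C.supp.ncard : ℝ) ≤ 2 / 3 * Fintype.card V

/-- `L_{G,≺,r}(v)`, where the linear ordering `≺` is encoded by an injective `ρ : V → ℕ`:
the set of vertices `x ⪯ v` reachable from `v` by a path of length at most `r` all of whose
internal vertices are `≻ v`. -/
def Lset {V : Type*} (G : SimpleGraph V) (ρ : V → ℕ) (r : ℕ) (v : V) : Set V :=
  {x | ρ x ≤ ρ v ∧ ∃ p : G.Walk v x, p.IsPath ∧ p.length ≤ r ∧
    ∀ z ∈ p.support, z ≠ v → z ≠ x → ρ v < ρ z}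

/-- The height of a set: the least `h ≥ 0` such that the set lies between two parallel
hyperplanes at distance `h`. -/
def heightOf {d : ℕ} (B : Set (Euc d)) : ℝ :=
  sInf {h : ℝ | 0 ≤ h ∧ ∃ u : Euc d, ‖u‖ = 1 ∧ ∃ a : ℝ,
    ∀ x ∈ B, a ≤ (inner ℝ u x : ℝ) ∧ (inner ℝ u x : ℝ) ≤ a + h}

/-- A parallelepiped with center `p` and sides `v₁, …, v_d`. -/
def IsParallelepiped {d : ℕ} (T : Set (Euc d)) : Prop :=
  ∃ (p : Euc d) (v : Fin d → Euc d), LinearIndependent ℝ v ∧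
    T = {x | ∃ α : Fin d → ℝ, (∀ i, α i ∈ Set.Icc (-1 : ℝ) 1) ∧ x = p + ∑ i, α i • v i}

/-- `T` is an envelope of `B`: a parallelepiped of smallest volume containing `B`. -/
def IsEnvelope {d : ℕ} (T B : Set (Euc d)) : Prop :=
  IsParallelepiped T ∧ B ⊆ T ∧
    ∀ T' : Set (Euc d), IsParallelepiped T' → B ⊆ T' → volume T ≤ volume T'

/-- A box in `ℝ^d`: a product of `d` closed intervals. -/
def IsBox {d : ℕ} (B : Set (Euc d)) : Prop :=
  ∃ a b : Fin d → ℝ, B = {x : Euc d | ∀ i, x i ∈ Set.Icc (a i) (b i)}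

/-- `Q` is `k'`-fat: every ball `B` centered in `Q` satisfies
`vol (B ∩ Q) ≥ min (vol B / k') (vol Q)`. -/
def IsFat {d : ℕ} (k' : ℝ) (Q : Set (Euc d)) : Prop :=
  ∀ x ∈ Q, ∀ ρ : ℝ, 0 < ρ →
    min (volume (Metric.closedBall x ρ) / ENNReal.ofReal k') (volume Q)
      ≤ volume (Metric.closedBall x ρ ∩ Q)

/-- The strong product of two simple graphs. -/
def strongProd {α β : Type*} (G : SimpleGraph α) (H : SimpleGraph β) :
    SimpleGraph (α × β) where
  Adj x y := x ≠ y ∧ (x.1 = y.1 ∨ G.Adj x.1 y.1) ∧ (x.2 = y.2 ∨ H.Adj x.2 y.2)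
  symm := by
    constructor
    rintro ⟨a1, a2⟩ ⟨b1, b2⟩ ⟨hne, h1, h2⟩
    refine ⟨hne.symm, ?_, ?_⟩
    · rcases h1 with h | h
      · exact Or.inl h.symm
      · exact Or.inr h.symm
    · rcases h2 with h | h
      · exact Or.inl h.symm
      · exact Or.inr h.symm
  loopless := by
    constructor
    rintro ⟨a1, a2⟩ ⟨hne, -, -⟩
    exact hne rfl

/-- The graph `G⁺(N, l)`: add hubs `v₁, …, v_N` and internally disjoint paths of length `l`
from each hub to each vertex of `G`.  The internal vertices of the path from hub `i` to
vertex `u` are `(i, u, 0), …, (i, u, l-2)`. -/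
def plusGraph {V : Type*} (G : SimpleGraph V) (N l : ℕ) :
    SimpleGraph (V ⊕ (Fin N ⊕ Fin N × V × Fin (l - 1))) :=
  SimpleGraph.fromRel (fun x y =>
    match x, y with
    | Sum.inl u, Sum.inl w => G.Adj u w
    | Sum.inr (Sum.inl _), Sum.inl _ => l = 1
    | Sum.inr (Sum.inl i), Sum.inr (Sum.inr (j, _, t)) => i = j ∧ (t : ℕ) = 0
    | Sum.inr (Sum.inr (i, u, t)), Sum.inr (Sum.inr (j, w, t')) =>
        i = j ∧ u = w ∧ (t' : ℕ) = (t : ℕ) + 1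
    | Sum.inr (Sum.inr (_, u, t)), Sum.inl w => u = w ∧ (t : ℕ) = l - 2
    | _, _ => False)

/-- `γ_d`: the supremum over affine hyperplanes `H` of the `(d-1)`-dimensional Hausdorff
measure of the intersection of `H` with the unit cube. -/
def gammaConst (d : ℕ) : ℝ :=
  sSup {γ : ℝ | ∃ (u : Euc d) (a : ℝ), ‖u‖ = 1 ∧
    γ = (MeasureTheory.Measure.hausdorffMeasure ((d : ℝ) - 1)
      ({x : Euc d | (inner ℝ u x : ℝ) = a} ∩ {x : Euc d | ∀ i, x i ∈ Set.Icc (0 : ℝ) 1})).toReal}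

/-- The sequence `ℓ_h`: `ℓ_1 = 1` and `ℓ_{h+1} = ℓ_h / (2(h+1))`. -/
def ellSeq : ℕ → ℝ
  | 0 => 2
  | n + 1 => ellSeq n / (2 * (n + 1))

/-- The trapezoid `T_h` with vertices `(0,0)`, `(ℓ_h,0)`, `(ℓ_h, hℓ_h)`, `(0, 2hℓ_h)`. -/
def trapezoidShape (h : ℕ) : Set (Euc 2) :=
  convexHull ℝ {(!₂[0, 0] : Euc 2), !₂[ellSeq h, 0], !₂[ellSeq h, h * ellSeq h],
    !₂[0, 2 * h * ellSeq h]}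

/-- An axis-aligned square `S_h` with sides of length `ℓ_h`. -/
def squareShape (h : ℕ) : Set (Euc 2) :=
  {x : Euc 2 | x 0 ∈ Set.Icc 0 (ellSeq h) ∧ x 1 ∈ Set.Icc 0 (ellSeq h)}

/-- The set `S*` of shapes. -/
def SStar : Set (Set (Euc 2)) :=
  {B | ∃ h : ℕ, 0 < h ∧ (B = trapezoidShape h ∨ B = squareShape h)}

/-- A class of finite graphs is `⊑`-representable. -/
def SqRepresentable (𝒢 : ∀ V : Type, Fintype V → SimpleGraph V → Prop) : Prop :=
  ∃ d c s : ℕ, 0 < d ∧ 0 < c ∧ 0 < s ∧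
    ∀ (V : Type) (instV : Fintype V) (G : SimpleGraph V), 𝒢 V instV G →
      ∃ S : Set (Set (Euc d)), (∀ B ∈ S, Convex ℝ B ∧ IsShape B) ∧
        S.Pairwise (SqComparable (s : ℝ)) ∧
        ∃ φ : V → Set (Euc d), IsIntersectionRep G φ ∧ IsThin (c : ℝ) φ ∧ IsSShaped S φ


lemma volume_box (d : ℕ) (a b : ℝ) :
    volume {x : Euc d | ∀ i, x i ∈ Set.Icc a b} = (ENNReal.ofReal (b - a))^d := by
  have h := (EuclideanSpace.volume_preserving_symm_measurableEquiv_toLp (Fin d)).measure_preimage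
    (s := Set.pi Set.univ fun _ : Fin d => Set.Icc a b) (by measurability)
  have h2 : (MeasurableEquiv.toLp 2 (Fin d → ℝ)).symm ⁻¹' (Set.pi Set.univ fun _ : Fin d => Set.Icc a b) = {x : Euc d | ∀ i, x i ∈ Set.Icc a b} := by
    ext x
    simp only [Set.mem_preimage, Set.mem_pi, Set.mem_univ, forall_true_left, Set.mem_setOf_eq]
    exact ⟨fun hx i => hx i, fun hx i => hx i⟩
  rw [h2] at h
  rw [h, volume_pi_pi]
  simp [Real.volume_Icc]

noncomputable def matLin {d : ℕ} (M : Matrix (Fin d) (Fin d) ℝ) : Euc d →ₗ[ℝ] Euc d where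
  toFun c := WithLp.toLp 2 (M.mulVec c)
  map_add' x y := by simp [Matrix.mulVec_add]
  map_smul' r x := by simp [Matrix.mulVec_smul]

lemma matLin_det {d : ℕ} (M : Matrix (Fin d) (Fin d) ℝ) : LinearMap.det (matLin M) = M.det := by
  classical
  set B : Module.Basis (Fin d) ℝ (Euc d) :=
    (Pi.basisFun ℝ (Fin d)).map (WithLp.linearEquiv 2 ℝ (Fin d → ℝ)).symm with hB
  rw [← LinearMap.det_toMatrix B]
  congr 1
  ext i j
  rw [LinearMap.toMatrix_apply]
  simp [hB, matLin]

lemma cramer_det {d : ℕ} (M : Matrix (Fin d) (Fin d) ℝ) (a : Fin d → ℝ) (m : Fin d) :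
    (M.updateCol m (M.mulVec a)).det = M.det * a m := by
  have h1 : (M.updateCol m (M.mulVec a)).det = Matrix.cramer M (M.mulVec a) m := by
    rw [Matrix.cramer_apply]
  rw [h1, Matrix.cramer_eq_adjugate_mulVec, Matrix.mulVec_mulVec, Matrix.adjugate_mul]
  simp [Matrix.smul_mulVec]

lemma diff_body {d : ℕ} (hd : 0 < d) {W : Set (Euc d)} (hconv : Convex ℝ W)
    (hcomp : IsCompact W) (hspan : affineSpan ℝ W = ⊤) :
    volume (W - W) ≤ ENNReal.ofReal ((4*(d:ℝ))^d) * volume W := by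
  classical
  have hint : (interior W).Nonempty := hconv.interior_nonempty_iff_affineSpan_eq_top.mpr hspan
  obtain ⟨x₀, hx₀⟩ := hint
  obtain ⟨ε, hε, hball⟩ := Metric.isOpen_iff.1 isOpen_interior x₀ hx₀
  have hx₀W : x₀ ∈ W := interior_subset hx₀
  set f : (Fin (d+1) → Euc d) → ℝ :=
    fun g => |(Matrix.of fun i j : Fin d => (g j.succ - g 0) i).det| with hf
  have hfc : Continuous f := by
    apply Continuous.abs
    apply Continuous.matrix_det
    apply continuous_pi; intro i; apply continuous_pi; intro j
    simp only [Matrix.of_apply]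
    have h1 : Continuous fun g : Fin (d+1) → Euc d => g j.succ - g 0 := by fun_prop
    exact (EuclideanSpace.proj i).continuous.comp h1
  set S : Set (Fin (d+1) → Euc d) := {g | ∀ i, g i ∈ W} with hS
  have hScomp : IsCompact S := by
    have : S = Set.pi Set.univ (fun _ => W) := by ext g; simp [hS, Set.mem_pi]
    rw [this]; exact isCompact_univ_pi fun _ => hcomp
  obtain ⟨g₀, hg₀S, hmax⟩ := hScomp.exists_isMaxOn ⟨fun _ => x₀, fun _ => hx₀W⟩
    hfc.continuousOn
  set M : Matrix (Fin d) (Fin d) ℝ := Matrix.of fun i j : Fin d => (g₀ j.succ - g₀ 0) i with hM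
  have hfg₀ : f g₀ = |M.det| := rfl
  have hMpos : 0 < |M.det| := by
    set g₁ : Fin (d+1) → Euc d :=
      Fin.cases x₀ (fun i' => x₀ + (ε/2) • EuclideanSpace.single i' 1) with hg₁
    have hg₁S : g₁ ∈ S := by
      intro i
      refine Fin.cases ?_ (fun i' => ?_) i
      · exact hx₀W
      · refine interior_subset (hball ?_)
        show dist (x₀ + (ε/2) • EuclideanSpace.single i' 1) x₀ < ε
        rw [dist_self_add_left, norm_smul, EuclideanSpace.norm_single, norm_one, mul_one,
          Real.norm_eq_abs, abs_of_pos (by linarith)]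
        linarith
    have hfg₁ : f g₁ = (ε/2)^d := by
      have hmm : (Matrix.of fun i j : Fin d => (g₁ j.succ - g₁ 0) i)
          = (ε/2) • (1 : Matrix (Fin d) (Fin d) ℝ) := by
        ext i j
        rw [Matrix.of_apply, Matrix.smul_apply, Matrix.one_apply]
        show (g₁ j.succ - g₁ 0) i = _
        rcases eq_or_ne i j with rfl | hij
        · simp [hg₁, EuclideanSpace.single_apply]
        · simp [hg₁, EuclideanSpace.single_apply, hij]
      show |(Matrix.of fun i j : Fin d => (g₁ j.succ - g₁ 0) i).det| = (ε/2)^d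
      rw [hmm]
      simp only [Matrix.det_smul, Matrix.det_one, mul_one, Fintype.card_fin]
      rw [abs_of_pos (by positivity)]
    have hle : f g₁ ≤ f g₀ := hmax hg₁S
    rw [hfg₁, hfg₀] at hle
    calc (0:ℝ) < (ε/2)^d := by positivity
    _ ≤ |M.det| := hle
  have hMdet : M.det ≠ 0 := fun h => by simp [h] at hMpos
  set a : Euc d → Fin d → ℝ := fun x => M⁻¹.mulVec (fun i => x i - g₀ 0 i) with ha
  have key1 : ∀ x : Euc d, M.mulVec (a x) = fun i => x i - g₀ 0 i := by
    intro x
    rw [ha, Matrix.mulVec_mulVec, Matrix.mul_nonsing_inv _ (isUnit_iff_ne_zero.mpr hMdet),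
      Matrix.one_mulVec]
  have key2 : ∀ x ∈ W, ∀ m : Fin d, |a x m| ≤ 1 := by
    intro x hx m
    set g' : Fin (d+1) → Euc d := Function.update g₀ m.succ x with hg'
    have hg'S : g' ∈ S := by
      intro i
      rcases eq_or_ne i m.succ with rfl | hi
      · simpa [hg'] using hx
      · simpa [hg', Function.update_of_ne hi] using hg₀S i
    have h0 : g' 0 = g₀ 0 := Function.update_of_ne (Fin.succ_ne_zero m).symm _ _
    have hsucc : ∀ j : Fin d, g' j.succ = if j = m then x else g₀ j.succ := by
      intro j
      rcases eq_or_ne j m with rfl | hj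
      · simp [hg']
      · rw [if_neg hj]
        exact Function.update_of_ne (fun h => hj (Fin.succ_injective _ h)) _ _
    have hM' : (Matrix.of fun i j : Fin d => (g' j.succ - g' 0) i)
        = M.updateCol m (M.mulVec (a x)) := by
      ext i j
      rw [Matrix.of_apply, Matrix.updateCol_apply, hsucc, h0]
      rcases eq_or_ne j m with rfl | hj
      · rw [if_pos rfl, if_pos rfl, key1 x]; rfl
      · rw [if_neg hj, if_neg hj]; rfl
    have hle : f g' ≤ f g₀ := hmax hg'S
    rw [hfg₀] at hle
    have hle2 : |(Matrix.of fun i j : Fin d => (g' j.succ - g' 0) i).det| ≤ |M.det| := hle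
    rw [hM', cramer_det, abs_mul] at hle2
    nlinarith [abs_nonneg (a x m)]
  -- the φ map and inclusions
  set φ := matLin M with hφ
  have hφdet : ENNReal.ofReal |LinearMap.det φ| = ENNReal.ofReal |M.det| := by
    rw [hφ, matLin_det]
  have hsub : W - W ⊆ φ '' {c : Euc d | ∀ i, c i ∈ Set.Icc (-2:ℝ) 2} := by
    rintro _ ⟨x, hxW, y, hyW, rfl⟩
    refine ⟨(WithLp.equiv 2 (Fin d → ℝ)).symm (a x - a y), fun i => ?_, ?_⟩
    · have h1 := key2 x hxW i; have h2 := key2 y hyW i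
      have h3 : |a x i - a y i| ≤ 2 := by
        calc |a x i - a y i| ≤ |a x i| + |a y i| := abs_sub _ _
        _ ≤ 2 := by linarith
      have h4 := abs_le.1 h3
      have h5 : (WithLp.equiv 2 (Fin d → ℝ)).symm (a x - a y) i = a x i - a y i := rfl
      rw [h5]
      exact ⟨h4.1, h4.2⟩
    · show WithLp.toLp 2 (M.mulVec (a x - a y)) = x - y
      ext i
      rw [WithLp.ofLp_toLp, Matrix.mulVec_sub, key1 x, key1 y]
      show (x i - g₀ 0 i) - (y i - g₀ 0 i) = (x - y) i
      have : (x - y) i = x i - y i := rfl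
      rw [this]; ring
  have hlowsub : (g₀ 0) +ᵥ (φ '' {c : Euc d | ∀ i, c i ∈ Set.Icc (0:ℝ) (1/(d:ℝ))}) ⊆ W := by
    rintro _ ⟨_, ⟨c, hc, rfl⟩, rfl⟩
    have hdne : (d:ℝ) ≠ 0 := Nat.cast_ne_zero.2 hd.ne'
    have hsum : ∑ i : Fin d, c i ≤ 1 := by
      calc ∑ i : Fin d, c i ≤ ∑ _i : Fin d, 1/(d:ℝ) :=
        Finset.sum_le_sum (fun i _ => (hc i).2)
      _ = 1 := by
        rw [Finset.sum_const, Finset.card_univ, Fintype.card_fin, nsmul_eq_mul]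
        field_simp
    set w : Fin (d+1) → ℝ := Fin.cases (1 - ∑ i, c i) c with hw
    have hw0 : ∀ i, 0 ≤ w i := by
      intro i
      refine Fin.cases ?_ (fun j => ?_) i
      · show (0:ℝ) ≤ w 0
        rw [hw]; simp only [Fin.cases_zero]; linarith
      · show (0:ℝ) ≤ w j.succ
        rw [hw]; simp only [Fin.cases_succ]; exact (hc j).1
    have hwsum : ∑ i, w i = 1 := by
      rw [Fin.sum_univ_succ, hw]
      simp only [Fin.cases_zero, Fin.cases_succ]
      ring
    have hmem := hconv.sum_mem (t := Finset.univ) (fun i _ => hw0 i) hwsum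
      (fun i _ => hg₀S i)
    have hpt : g₀ 0 +ᵥ φ c = ∑ i, w i • g₀ i := by
      ext i
      have hR : (∑ i', w i' • g₀ i') i = ∑ i', w i' * g₀ i' i := by
        exact map_sum (EuclideanSpace.proj (𝕜 := ℝ) i) (fun i' => w i' • g₀ i') Finset.univ
      have hL : (g₀ 0 +ᵥ φ c) i
          = g₀ 0 i + ∑ j, (g₀ j.succ i - g₀ 0 i) * c j := by
        show g₀ 0 i + (M.mulVec c) i = _
        congr 1
      rw [hL, hR, Fin.sum_univ_succ, hw]
      simp only [Fin.cases_zero, Fin.cases_succ]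
      have hsplit : ∑ x : Fin d, (g₀ x.succ i - g₀ 0 i) * c x
          = (∑ x : Fin d, c x * g₀ x.succ i) - (∑ x : Fin d, c x) * g₀ 0 i := by
        rw [Finset.sum_mul, ← Finset.sum_sub_distrib]
        exact Finset.sum_congr rfl fun x _ => by ring
      rw [hsplit]
      ring
    show g₀ 0 +ᵥ φ c ∈ W
    rw [hpt]
    exact hmem
  have hbox2 : volume {c : Euc d | ∀ i, c i ∈ Set.Icc (-2:ℝ) 2} = (ENNReal.ofReal 4)^d := by
    rw [volume_box]; norm_num
  have hbox1 : volume {c : Euc d | ∀ i, c i ∈ Set.Icc (0:ℝ) (1/(d:ℝ))}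
      = (ENNReal.ofReal (1/(d:ℝ)))^d := by
    rw [volume_box]; norm_num
  have hup : volume (W - W) ≤ ENNReal.ofReal |M.det| * (ENNReal.ofReal 4)^d := by
    calc volume (W - W) ≤ volume (φ '' {c : Euc d | ∀ i, c i ∈ Set.Icc (-2:ℝ) 2}) :=
      measure_mono hsub
    _ = ENNReal.ofReal |LinearMap.det φ| * volume {c : Euc d | ∀ i, c i ∈ Set.Icc (-2:ℝ) 2} :=
      Measure.addHaar_image_linearMap _ _ _
    _ = _ := by rw [hφdet, hbox2]
  have hlow : ENNReal.ofReal |M.det| * (ENNReal.ofReal (1/(d:ℝ)))^d ≤ volume W := by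
    have h1 : volume ((g₀ 0) +ᵥ (φ '' {c : Euc d | ∀ i, c i ∈ Set.Icc (0:ℝ) (1/(d:ℝ))}))
        = ENNReal.ofReal |M.det| * (ENNReal.ofReal (1/(d:ℝ)))^d := by
      rw [measure_vadd, Measure.addHaar_image_linearMap, hφdet, hbox1]
    rw [← h1]
    exact measure_mono hlowsub
  have hdpos : (0:ℝ) < d := Nat.cast_pos.2 hd
  have hkey : ENNReal.ofReal ((4*(d:ℝ))^d) * (ENNReal.ofReal (1/(d:ℝ)))^d
      = (ENNReal.ofReal 4)^d := by
    rw [ENNReal.ofReal_pow (by positivity), ← mul_pow, ← ENNReal.ofReal_mul (by positivity)]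
    congr 2
    field_simp
  calc volume (W - W) ≤ ENNReal.ofReal |M.det| * (ENNReal.ofReal 4)^d := hup
  _ = ENNReal.ofReal ((4*(d:ℝ))^d) * (ENNReal.ofReal |M.det| * (ENNReal.ofReal (1/(d:ℝ)))^d) := by
    rw [← mul_assoc, mul_comm (ENNReal.ofReal ((4*(d:ℝ))^d)), mul_assoc, hkey]
  _ ≤ ENNReal.ofReal ((4*(d:ℝ))^d) * volume W := mul_le_mul_right hlow _

lemma smul_mono_set {d : ℕ} {U : Set (Euc d)} (hc : Convex ℝ U) (h0 : (0:Euc d) ∈ U) {a b : ℝ}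
    (ha : 0 ≤ a) (hab : a ≤ b) : a • U ⊆ b • U := by
  rintro _ ⟨u, hu, rfl⟩
  rcases eq_or_lt_of_le (ha.trans hab) with hb | hb
  · have ha0 : a = 0 := le_antisymm (hab.trans hb.symm.le) ha
    exact ⟨u, hu, by rw [← hb, ha0]⟩
  · refine ⟨(a/b) • u, ?_, ?_⟩
    · have h1 : (0:ℝ) ≤ 1 - a/b := by
        rw [sub_nonneg]; exact (div_le_one hb).2 hab
      have h2 : a/b + (1 - a/b) = 1 := by ring
      have := hc hu h0 (div_nonneg ha hb.le) h1 h2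
      simpa using this
    · show b • ((a/b) • u) = a • u
      rw [smul_smul, mul_div_cancel₀ _ hb.ne']

lemma chain_walk {d : ℕ} {V : Type*} {G : SimpleGraph V} (ω : V → Set (Euc d))
    {U : Set (Euc d)} (hUc : Convex ℝ U) (hU0 : (0 : Euc d) ∈ U)
    (hadj : ∀ a b : V, G.Adj a b → (ω a ∩ ω b).Nonempty) :
    ∀ {a b : V} (p : G.Walk a b), (∀ z ∈ p.support, ω z - ω z ⊆ U) →
      ∀ y ∈ ω b, ∃ y' ∈ ω a, y - y' ∈ ((p.length : ℝ)) • U := by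
  intro a b p
  induction p with
  | nil =>
    intro _ y hy
    refine ⟨y, hy, ?_⟩
    rw [SimpleGraph.Walk.length_nil, Nat.cast_zero, zero_smul_set ⟨0, hU0⟩]
    simp
  | @cons a c b h q ih =>
    intro hsup y hy
    obtain ⟨y', hy', hmem⟩ := ih (fun z hz => hsup z (by simp [hz])) y hy
    obtain ⟨z, hz1, hz2⟩ := hadj _ _ h
    refine ⟨z, hz1, ?_⟩
    have h1 : y' - z ∈ U := hsup c (by simp) (Set.sub_mem_sub hy' hz2)
    have key : y - z = (y - y') + (y' - z) := (sub_add_sub_cancel _ _ _).symm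
    rw [key, SimpleGraph.Walk.length_cons, Nat.cast_add, Nat.cast_one,
      hUc.add_smul (Nat.cast_nonneg _) zero_le_one]
    exact Set.add_mem_add hmem (by rw [one_smul]; exact h1)

lemma count_bound {d : ℕ} {V : Type*} [Fintype V] (ι : V → Set (Euc d))
    (hmeas : ∀ u, MeasurableSet (ι u)) {c : ℝ}
    (hthin : ∀ x : Euc d, ({u : V | x ∈ ι u}.ncard : ℝ) ≤ c)
    (K : Set (Euc d)) (F : Finset V) :
    ∑ x ∈ F, volume (K ∩ ι x) ≤ ENNReal.ofReal c * volume K := by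
  classical
  have h1 : ∀ x ∈ F, volume (K ∩ ι x) = ∫⁻ y in K, (ι x).indicator 1 y := by
    intro x _
    rw [lintegral_indicator_one (hmeas x), Measure.restrict_apply (hmeas x), Set.inter_comm]
  calc ∑ x ∈ F, volume (K ∩ ι x) = ∑ x ∈ F, ∫⁻ y in K, (ι x).indicator 1 y :=
    Finset.sum_congr rfl h1
  _ = ∫⁻ y in K, ∑ x ∈ F, (ι x).indicator 1 y :=
    (lintegral_finset_sum _ (fun x _ => measurable_const.indicator (hmeas x))).symm
  _ ≤ ∫⁻ _ in K, ENNReal.ofReal c := by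
    refine lintegral_mono fun y => ?_
    have hcard : ∑ x ∈ F, (ι x).indicator (1 : Euc d → ℝ≥0∞) y
        = ((F.filter fun x => y ∈ ι x).card : ℝ≥0∞) := by
      rw [Finset.card_filter]
      push_cast
      refine Finset.sum_congr rfl fun x _ => ?_
      by_cases hx : y ∈ ι x <;> simp [Set.indicator_apply, hx]
    rw [hcard]
    have h2 : ((F.filter fun x => y ∈ ι x).card : ℕ) ≤ {u : V | y ∈ ι u}.ncard := by
      rw [← Set.ncard_coe_finset]
      refine Set.ncard_le_ncard ?_ (Set.toFinite _)
      intro x hx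
      simp only [Finset.coe_filter, Set.mem_setOf_eq] at hx
      exact hx.2
    have h3 : ((F.filter fun x => y ∈ ι x).card : ℝ) ≤ c :=
      le_trans (by exact_mod_cast h2) (hthin y)
    calc ((F.filter fun x => y ∈ ι x).card : ℝ≥0∞)
        = ENNReal.ofReal ((F.filter fun x => y ∈ ι x).card : ℝ) := by
          rw [ENNReal.ofReal_natCast]
    _ ≤ ENNReal.ofReal c := ENNReal.ofReal_le_ofReal h3
  _ = ENNReal.ofReal c * volume K := setLIntegral_const _ _

end

theorem stmt7 (c k s : ℝ) (hc : 1 ≤ c) (hk : 1 ≤ k) (hs : 1 ≤ s) (d : ℕ) (hd : 0 < d) :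
    ∃ δ : ℝ, ∀ (V : Type) [Fintype V] (G : SimpleGraph V) (ρ : V → ℕ),
      Function.Injective ρ →
      ∀ ι ω : V → Set (Euc d),
      (∀ v, IsShape (ι v) ∧ IsShape (ω v)) →
      (∀ v, Convex ℝ (ω v) ∧ ι v ⊆ ω v) →
      (∀ x : Euc d, ({v : V | x ∈ ι v}.ncard : ℝ) ≤ c) →
      (∀ u v : V, ρ u < ρ v → LeK k (ω v) (ω u) ∧ SqIn s (ω v) (ι u)) →
      (∀ u v : V, G.Adj u v → ρ u < ρ v → (ω v ∩ ι u).Nonempty) →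
      ∀ r : ℕ, 0 < r → ∀ v : V, ((Lset G ρ r v).ncard : ℝ) ≤ δ * (r : ℝ) ^ d := by
  classical
  refine ⟨c * s * (4*(d:ℝ))^d * (3*k)^d + 1, ?_⟩
  intro V _ G ρ hρ ι ω hshape hcs hthin hord hedge r hr v
  have hc0 : (0:ℝ) < c := lt_of_lt_of_le one_pos hc
  have hs0 : (0:ℝ) < s := lt_of_lt_of_le one_pos hs
  have hk0 : (0:ℝ) < k := lt_of_lt_of_le one_pos hk
  set W := ω v with hWdef
  have hWconv : Convex ℝ W := (hcs v).1
  have hWcomp : IsCompact W := (hshape v).2.1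
  have hWspan : affineSpan ℝ W = ⊤ := (hshape v).2.2
  obtain ⟨x₀, hx₀⟩ := hWconv.interior_nonempty_iff_affineSpan_eq_top.mpr hWspan
  have hw₀ : x₀ ∈ W := interior_subset hx₀
  set C := W - W with hCdef
  have hCconv : Convex ℝ C := hWconv.sub hWconv
  have hC0 : (0 : Euc d) ∈ C := by
    have h0 := Set.sub_mem_sub hw₀ hw₀
    rwa [sub_self] at h0
  set U := k • C with hUdef
  have hUconv : Convex ℝ U := hCconv.smul k
  have hU0 : (0 : Euc d) ∈ U := ⟨0, hC0, smul_zero k⟩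
  have hA0 : volume W ≠ 0 :=
    (MeasureTheory.Measure.measure_pos_of_nonempty_interior _ ⟨x₀, hx₀⟩).ne'
  have hAtop : volume W ≠ ⊤ := hWcomp.measure_lt_top.ne
  have hadj : ∀ a b : V, G.Adj a b → (ω a ∩ ω b).Nonempty := by
    intro a b hab
    rcases lt_trichotomy (ρ a) (ρ b) with hlt | heq | hgt
    · obtain ⟨x, hx1, hx2⟩ := hedge a b hab hlt
      exact ⟨x, (hcs a).2 hx2, hx1⟩
    · exact absurd (hρ heq) (G.ne_of_adj hab)
    · obtain ⟨x, hx1, hx2⟩ := hedge b a hab.symm hgt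
      exact ⟨x, hx1, (hcs b).2 hx2⟩
  set e : ℝ := (r:ℝ) * k with hedef
  have he0 : (0:ℝ) ≤ e := by positivity
  set K := x₀ +ᵥ ((e + 2) • C) with hKdef
  -- main geometric claim
  have claim : ∀ x ∈ Lset G ρ r v \ {v},
      volume W / ENNReal.ofReal s ≤ volume (K ∩ ι x) := by
    intro x hx
    obtain ⟨⟨hρx, p, hpath, hplen, hpint⟩, hxv0⟩ := hx
    have hxv : x ≠ v := hxv0
    have hρxv : ρ x < ρ v := lt_of_le_of_ne hρx fun hh => hxv (hρ hh)
    obtain ⟨z, hadj_xz, q, hq⟩ := SimpleGraph.Walk.exists_eq_cons_of_ne hxv p.reverse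
    have hsupp_eq : p.reverse.support = x :: q.support := by
      rw [hq, SimpleGraph.Walk.support_cons]
    have hqsub : ∀ z' ∈ q.support, z' ∈ p.support := by
      intro z' hz'
      have h2 : z' ∈ p.reverse.support := by
        rw [hsupp_eq]; exact List.mem_cons_of_mem _ hz'
      rwa [SimpleGraph.Walk.support_reverse, List.mem_reverse] at h2
    have hxnot : x ∉ q.support := by
      have hrp : p.reverse.IsPath := hpath.reverse
      rw [hq, SimpleGraph.Walk.cons_isPath_iff] at hrp
      exact hrp.2
    have hqlen : q.length + 1 ≤ r := by
      have h1 : p.reverse.length = q.length + 1 := by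
        rw [hq, SimpleGraph.Walk.length_cons]
      have h2 : p.reverse.length = p.length := SimpleGraph.Walk.length_reverse p
      omega
    have hUsub : ∀ z' ∈ q.support, ω z' - ω z' ⊆ U := by
      intro z' hz'
      have hz'x : z' ≠ x := fun hh => hxnot (hh ▸ hz')
      rcases eq_or_ne z' v with rfl | hz'v
      · intro y hy
        have h1 : C ⊆ k • C := by
          have h2 := smul_mono_set hCconv hC0 zero_le_one hk
          rwa [one_smul] at h2
        exact h1 hy
      · have hρz' : ρ v < ρ z' := hpint z' (hqsub z' hz') hz'v hz'x
        obtain ⟨t, ht⟩ := (hord v z' hρz').1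
        rintro _ ⟨p₁, hp₁, p₂, hp₂, rfl⟩
        obtain ⟨w₁, hw₁, hw₁e⟩ := ht ⟨p₁, hp₁, rfl⟩
        obtain ⟨w₂, hw₂, hw₂e⟩ := ht ⟨p₂, hp₂, rfl⟩
        refine ⟨w₁ - w₂, Set.sub_mem_sub hw₁ hw₂, ?_⟩
        show k • (w₁ - w₂) = p₁ - p₂
        have e₁ : k • w₁ = t + p₁ := hw₁e
        have e₂ : k • w₂ = t + p₂ := hw₂e
        rw [smul_sub, e₁, e₂]
        abel
    have hz_in_q : z ∈ q.support := SimpleGraph.Walk.start_mem_support q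
    have hzx : z ≠ x := fun hh => hxnot (hh ▸ hz_in_q)
    have hρxz : ρ x < ρ z := by
      rcases eq_or_ne z v with rfl | hzv
      · exact hρxv
      · exact lt_trans hρxv (hpint z (hqsub z hz_in_q) hzv hzx)
    obtain ⟨q₀, hq₀z, hq₀x⟩ := hedge x z hadj_xz hρxz
    obtain ⟨y', hy'W, hmem⟩ := chain_walk ω hUconv hU0 hadj q.reverse
      (fun z' hz' => hUsub z'
        (by rwa [SimpleGraph.Walk.support_reverse, List.mem_reverse] at hz')) q₀ hq₀z
    have hmem2 : q₀ - y' ∈ e • C := by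
      have h1 : ((q.reverse.length : ℝ)) • U = ((q.reverse.length : ℝ) * k) • C := by
        rw [hUdef, mul_smul]
      rw [h1] at hmem
      refine smul_mono_set hCconv hC0 (by positivity) ?_ hmem
      have hlen : (q.reverse.length : ℝ) ≤ (r : ℝ) := by
        rw [SimpleGraph.Walk.length_reverse]
        exact_mod_cast le_trans (Nat.le_succ _) hqlen
      calc (q.reverse.length : ℝ) * k ≤ (r:ℝ) * k :=
        mul_le_mul_of_nonneg_right hlen hk0.le
      _ = e := rfl
    obtain ⟨t, hq₀t, hvol⟩ := (hord x v hρxv).2 q₀ hq₀x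
    rw [Set.mem_vadd_set] at hq₀t
    obtain ⟨w₁, hw₁, hw₁e⟩ := hq₀t
    have hw₁e' : t + w₁ = q₀ := hw₁e
    have hsubK : t +ᵥ W ⊆ K := by
      rintro _ ⟨w₂, hw₂, rfl⟩
      have hsplit : (e + 2) • C = (1:ℝ) • C + (e • C + (1:ℝ) • C) := by
        have h12 : e + 2 = 1 + (e + 1) := by ring
        rw [h12, hCconv.add_smul zero_le_one (by positivity : (0:ℝ) ≤ e + 1),
          hCconv.add_smul he0 zero_le_one]
      rw [hKdef, Set.mem_vadd_set]
      refine ⟨(y' - x₀) + ((q₀ - y') + (w₂ - w₁)), ?_, ?_⟩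
      · rw [hsplit]
        refine Set.add_mem_add ?_ (Set.add_mem_add hmem2 ?_)
        · rw [one_smul]; exact Set.sub_mem_sub hy'W hw₀
        · rw [one_smul]; exact Set.sub_mem_sub hw₂ hw₁
      · show x₀ + ((y' - x₀) + ((q₀ - y') + (w₂ - w₁))) = t + w₂
        rw [← hw₁e']
        abel
    calc volume W / ENNReal.ofReal s ≤ volume ((t +ᵥ W) ∩ ι x) := hvol
    _ ≤ volume (K ∩ ι x) := measure_mono (Set.inter_subset_inter_left _ hsubK)
  -- counting
  set F := (Lset G ρ r v \ {v}).toFinset with hFdef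
  have hmain : (F.card : ℝ≥0∞) * (volume W / ENNReal.ofReal s)
      ≤ ENNReal.ofReal c * volume K := by
    calc (F.card : ℝ≥0∞) * (volume W / ENNReal.ofReal s)
        = ∑ _x ∈ F, (volume W / ENNReal.ofReal s) := by
          rw [Finset.sum_const, nsmul_eq_mul]
    _ ≤ ∑ x ∈ F, volume (K ∩ ι x) :=
      Finset.sum_le_sum fun x hx => claim x (by rwa [hFdef, Set.mem_toFinset] at hx)
    _ ≤ ENNReal.ofReal c * volume K :=
      count_bound ι (fun u => (hshape u).1.1.isClosed.measurableSet) hthin K F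
  have hvolK : volume K
      ≤ ENNReal.ofReal ((e+2)^d) * (ENNReal.ofReal ((4*(d:ℝ))^d) * volume W) := by
    rw [hKdef, measure_vadd, Measure.addHaar_smul, finrank_euclideanSpace_fin,
      abs_of_nonneg (by positivity)]
    exact mul_le_mul_right (diff_body hd hWconv hWcomp hWspan) _
  set B : ℝ := c * (e+2)^d * (4*(d:ℝ))^d with hBdef
  have hBpos : (0:ℝ) ≤ B := by
    rw [hBdef]
    exact mul_nonneg (mul_nonneg hc0.le (pow_nonneg (by linarith) d)) (by positivity)
  have hmain2 : (F.card : ℝ≥0∞) * (volume W / ENNReal.ofReal s)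
      ≤ ENNReal.ofReal B * volume W := by
    refine le_trans hmain ?_
    calc ENNReal.ofReal c * volume K
        ≤ ENNReal.ofReal c * (ENNReal.ofReal ((e+2)^d)
          * (ENNReal.ofReal ((4*(d:ℝ))^d) * volume W)) := mul_le_mul_right hvolK _
    _ = ENNReal.ofReal B * volume W := by
      rw [hBdef, ENNReal.ofReal_mul (mul_nonneg hc0.le (pow_nonneg (by linarith) d)),
        ENNReal.ofReal_mul hc0.le]
      ring
  have hS0 : ENNReal.ofReal s ≠ 0 := by
    rw [← ENNReal.ofReal_zero]
    intro hh
    have := ENNReal.ofReal_eq_ofReal_iff hs0.le le_rfl |>.1 hh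
    linarith
  have hStop : ENNReal.ofReal s ≠ ⊤ := ENNReal.ofReal_ne_top
  have hone : (volume W / ENNReal.ofReal s) * (ENNReal.ofReal s / volume W) = 1 := by
    rw [div_eq_mul_inv, div_eq_mul_inv, mul_assoc, ← mul_assoc (ENNReal.ofReal s)⁻¹,
      ENNReal.inv_mul_cancel hS0 hStop, one_mul, ENNReal.mul_inv_cancel hA0 hAtop]
  have hNle : (F.card : ℝ≥0∞) ≤ ENNReal.ofReal B * ENNReal.ofReal s := by
    calc (F.card : ℝ≥0∞)
        = (F.card : ℝ≥0∞) * ((volume W / ENNReal.ofReal s) * (ENNReal.ofReal s / volume W)) := by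
          rw [hone, mul_one]
    _ = ((F.card : ℝ≥0∞) * (volume W / ENNReal.ofReal s)) * (ENNReal.ofReal s / volume W) := by
          ring
    _ ≤ (ENNReal.ofReal B * volume W) * (ENNReal.ofReal s / volume W) :=
          mul_le_mul_left hmain2 _
    _ = (ENNReal.ofReal B * ENNReal.ofReal s) * (volume W * (volume W)⁻¹) := by
          rw [div_eq_mul_inv]; ring
    _ = ENNReal.ofReal B * ENNReal.ofReal s := by
          rw [ENNReal.mul_inv_cancel hA0 hAtop, mul_one]
  have hNreal : (F.card : ℝ) ≤ B * s := by
    have h1 : (F.card : ℝ≥0∞) = ENNReal.ofReal (F.card : ℝ) := by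
      rw [ENNReal.ofReal_natCast]
    rw [h1, ← ENNReal.ofReal_mul hBpos] at hNle
    exact (ENNReal.ofReal_le_ofReal_iff (mul_nonneg hBpos hs0.le)).1 hNle
  -- conclude
  have hvL : v ∈ Lset G ρ r v := by
    refine ⟨le_refl _, SimpleGraph.Walk.nil, SimpleGraph.Walk.IsPath.nil, by simp, ?_⟩
    intro z hz hzv _
    simp only [SimpleGraph.Walk.support_nil, List.mem_singleton] at hz
    exact absurd hz hzv
  have hcard : (Lset G ρ r v).ncard = F.card + 1 := by
    rw [hFdef, ← Set.ncard_eq_toFinset_card']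
    exact (Set.ncard_diff_singleton_add_one hvL (Set.toFinite _)).symm
  have hr1 : (1:ℝ) ≤ (r:ℝ) := by exact_mod_cast hr
  have hpow : (e+2)^d ≤ (3*k)^d * (r:ℝ)^d := by
    rw [← mul_pow]
    refine pow_le_pow_left₀ (by positivity) ?_ d
    rw [hedef]
    nlinarith
  have hrd : (1:ℝ) ≤ (r:ℝ)^d := one_le_pow₀ hr1
  have h2 : B * s ≤ c * s * (4*(d:ℝ))^d * ((3*k)^d * (r:ℝ)^d) := by
    rw [hBdef]
    calc c * (e+2)^d * (4*(d:ℝ))^d * s = (c * s * (4*(d:ℝ))^d) * (e+2)^d := by ring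
    _ ≤ (c * s * (4*(d:ℝ))^d) * ((3*k)^d * (r:ℝ)^d) := by
        exact mul_le_mul_of_nonneg_left hpow
          (mul_nonneg (mul_nonneg hc0.le hs0.le) (by positivity))
    _ = c * s * (4*(d:ℝ))^d * ((3*k)^d * (r:ℝ)^d) := rfl
  have h3 : (c * s * (4*(d:ℝ))^d * (3*k)^d + 1) * (r:ℝ)^d
      = c * s * (4*(d:ℝ))^d * ((3*k)^d * (r:ℝ)^d) + (r:ℝ)^d := by ring
  calc ((Lset G ρ r v).ncard : ℝ) = (F.card : ℝ) + 1 := by rw [hcard]; push_cast; ring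
  _ ≤ B * s + 1 := by linarith
  _ ≤ (c * s * (4*(d:ℝ))^d * (3*k)^d + 1) * (r:ℝ)^d := by rw [h3]; linarith
end

section
/- For all positive integers d and k, there exists an integer k' such that every convex shape in ℝ^d with aspect ratio at most k is k'-fat. -/
open MeasureTheory Set Pointwise Metric Function
open scoped RealInnerProductSpace ENNReal

open Matrix

lemma stmt12_height_nonneg {d : ℕ} (B : Set (Euc d)) : 0 ≤ heightOf B :=
  Real.sInf_nonneg (fun _ hx => hx.1)

lemma stmt12_extent_ge {d : ℕ} {Q : Set (Euc d)} (hQ : IsCompact Q) (hne : Q.Nonempty)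
    {u : Euc d} (hu : ‖u‖ = 1) :
    ∃ p ∈ Q, ∃ q ∈ Q, (∀ x ∈ Q, ⟪u, p⟫ ≤ ⟪u, x⟫ ∧ ⟪u, x⟫ ≤ ⟪u, q⟫) ∧
      heightOf Q ≤ ⟪u, q⟫ - ⟪u, p⟫ := by
  obtain ⟨p, hp, hmin⟩ := hQ.exists_isMinOn (f := fun x : Euc d => ⟪u, x⟫) hne
    (Continuous.continuousOn (by exact continuous_const.inner continuous_id))
  obtain ⟨q, hq, hmax⟩ := hQ.exists_isMaxOn (f := fun x : Euc d => ⟪u, x⟫) hne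
    (Continuous.continuousOn (by exact continuous_const.inner continuous_id))
  refine ⟨p, hp, q, hq, fun x hx => ⟨hmin hx, hmax hx⟩, ?_⟩
  apply csInf_le ⟨0, fun h hh => hh.1⟩
  refine ⟨sub_nonneg.2 (hmax hp), u, hu, ⟪u, p⟫, fun x hx => ⟨hmin hx, by
    have h2 : ⟪u, x⟫ ≤ ⟪u, q⟫ := hmax hx; linarith⟩⟩

set_option maxRecDepth 10000 in
lemma stmt12_aux_vecs {d : ℕ} {Q : Set (Euc d)} {p₀ : Euc d} {w : ℝ} (hw : 0 < w)
    (hext : ∀ u : Euc d, ‖u‖ = 1 → ∃ p ∈ Q, w / 2 ≤ |⟪u, p - p₀⟫|) :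
    ∀ n, n ≤ d → ∃ v u : Fin n → Euc d,
      (∀ j, p₀ + v j ∈ Q) ∧ Orthonormal ℝ u ∧
      Submodule.span ℝ (Set.range v) ≤ Submodule.span ℝ (Set.range u) ∧
      (∀ j i : Fin n, i < j → ⟪u j, v i⟫ = 0) ∧
      (∀ j, w / 2 ≤ ⟪u j, v j⟫) := by
  intro n
  induction n with
  | zero =>
    intro _
    exact ⟨(fun i => i.elim0), (fun i => i.elim0), (fun j => j.elim0),
      orthonormal_iff_ite.2 (fun i => i.elim0), by simp, fun j => j.elim0, fun j => j.elim0⟩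
  | succ n ih =>
    intro hn
    obtain ⟨v, u, h1, h2, h3, h4, h5⟩ := ih (le_of_lt hn)
    obtain ⟨U, hU⟩ : ∃ U : Submodule ℝ (Euc d), U = Submodule.span ℝ (Set.range u) := ⟨_, rfl⟩
    have h3' : Submodule.span ℝ (Set.range v) ≤ U := hU ▸ h3
    have hspan_sub : ∀ i : Fin n, u i ∈ U := fun i => hU ▸ Submodule.subset_span ⟨i, rfl⟩
    have hspan_subv : ∀ i : Fin n, v i ∈ U := fun i => h3' (Submodule.subset_span ⟨i, rfl⟩)
    -- U is a proper subspace
    have hUfr : Module.finrank ℝ U ≤ n := by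
      rw [hU, finrank_span_eq_card h2.linearIndependent]
      simp
    have hUtop : U ≠ ⊤ := by
      intro h
      rw [h] at hUfr
      have h9 : Module.finrank ℝ (⊤ : Submodule ℝ (Euc d)) = d := by
        rw [finrank_top]; exact finrank_euclideanSpace_fin
      omega
    have hbot : Uᗮ ≠ ⊥ := fun h => hUtop (Submodule.orthogonal_eq_bot_iff.1 h)
    obtain ⟨u₁, hu₁U, hu₁0⟩ := Submodule.exists_mem_ne_zero_of_ne_bot hbot
    obtain ⟨u₂, hu₂⟩ : ∃ x : Euc d, x = ‖u₁‖⁻¹ • u₁ := ⟨_, rfl⟩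
    have hu₂n : ‖u₂‖ = 1 := by
      rw [hu₂, norm_smul, norm_inv, norm_norm, inv_mul_cancel₀ (norm_ne_zero_iff.2 hu₁0)]
    have hu₂U : u₂ ∈ Uᗮ := hu₂ ▸ Submodule.smul_mem _ _ hu₁U
    obtain ⟨p, hpQ, hpw⟩ := hext u₂ hu₂n
    obtain ⟨vn, hvn⟩ : ∃ x : Euc d, x = p - p₀ := ⟨_, rfl⟩
    obtain ⟨P, hP, hPU⟩ : ∃ x : Euc d, x = (U.orthogonalProjectionOnto vn : Euc d) ∧ x ∈ U :=
      ⟨_, rfl, SetLike.coe_mem _⟩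
    obtain ⟨g, hgdef⟩ : ∃ x : Euc d, x = vn - P := ⟨_, rfl⟩
    have hgU : g ∈ Uᗮ := by
      rw [hgdef, hP]; exact U.sub_starProjection_mem_orthogonal vn
    have horth : ∀ y, y ∈ Uᗮ → ∀ z, z ∈ U → ⟪y, z⟫ = 0 := by
      intro y hy z hz
      have := (Submodule.mem_orthogonal U y).1 hy _ hz
      rwa [real_inner_comm] at this
    have hgw : w / 2 ≤ ‖g‖ := by
      have h6 : ⟪u₂, vn⟫ = ⟪u₂, g⟫ := by
        rw [hgdef, inner_sub_right, horth _ hu₂U _ hPU, sub_zero]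
      calc w / 2 ≤ |⟪u₂, vn⟫| := hvn ▸ hpw
        _ = |⟪u₂, g⟫| := by rw [h6]
        _ ≤ ‖u₂‖ * ‖g‖ := abs_real_inner_le_norm _ _
        _ = ‖g‖ := by rw [hu₂n, one_mul]
    have hg0 : g ≠ 0 := by
      intro h; rw [h, norm_zero] at hgw; linarith
    obtain ⟨un, hun⟩ : ∃ x : Euc d, x = ‖g‖⁻¹ • g := ⟨_, rfl⟩
    have hunU : un ∈ Uᗮ := hun ▸ Submodule.smul_mem _ _ hgU
    have hunn : ‖un‖ = 1 := by
      rw [hun, norm_smul, norm_inv, norm_norm, inv_mul_cancel₀ (norm_ne_zero_iff.2 hg0)]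
    have hvn_decomp : vn = P + ‖g‖ • un := by
      rw [hun, smul_smul, mul_inv_cancel₀ (norm_ne_zero_iff.2 hg0), one_smul, hgdef]; abel
    have hunvn : ⟪un, vn⟫ = ‖g‖ := by
      rw [hvn_decomp, inner_add_right, horth _ hunU _ hPU, zero_add,
        real_inner_smul_right, real_inner_self_eq_norm_sq, hunn]
      ring
    have hun_oldv : ∀ i : Fin n, ⟪un, v i⟫ = 0 := fun i => horth _ hunU _ (hspan_subv i)
    have hun_oldu : ∀ i : Fin n, ⟪un, u i⟫ = 0 := fun i => horth _ hunU _ (hspan_sub i)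
    refine ⟨Fin.snoc v vn, Fin.snoc u un, ?_, ?_, ?_, ?_, ?_⟩
    · intro j
      refine Fin.lastCases ?_ ?_ j
      · rw [Fin.snoc_last, hvn]; simpa using hpQ
      · intro i; rw [Fin.snoc_castSucc]; exact h1 i
    · rw [orthonormal_iff_ite]
      intro i j
      refine Fin.lastCases ?_ ?_ i <;> [skip; intro i'] <;> refine Fin.lastCases ?_ ?_ j
      · rw [Fin.snoc_last, if_pos rfl, real_inner_self_eq_norm_sq, hunn]; norm_num
      · intro j'
        rw [Fin.snoc_last, Fin.snoc_castSucc,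
          if_neg (by simp [Fin.ext_iff]; omega)]
        exact hun_oldu j'
      · rw [Fin.snoc_last, Fin.snoc_castSucc,
          if_neg (by simp [Fin.ext_iff]; omega)]
        rw [real_inner_comm]; exact hun_oldu i'
      · intro j'
        rw [Fin.snoc_castSucc, Fin.snoc_castSucc]
        have h8 := orthonormal_iff_ite.1 h2 i' j'
        rw [h8]
        by_cases h : i' = j'
        · simp [h]
        · rw [if_neg h, if_neg (by simp [Fin.ext_iff] at h ⊢; omega)]
    · rw [Submodule.span_le]
      rintro x ⟨j, rfl⟩
      refine Fin.lastCases ?_ ?_ j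
      · rw [Fin.snoc_last, hvn_decomp]
        refine Submodule.add_mem _ ?_ (Submodule.smul_mem _ _ ?_)
        · have : U ≤ Submodule.span ℝ (Set.range (Fin.snoc u un : Fin (n+1) → Euc d)) := by
            rw [hU]
            apply Submodule.span_mono
            rintro y ⟨i, rfl⟩
            exact ⟨i.castSucc, Fin.snoc_castSucc _ _ _⟩
          exact this hPU
        · exact Submodule.subset_span ⟨Fin.last n, Fin.snoc_last _ _⟩
      · intro i
        rw [Fin.snoc_castSucc]
        have h10 : U ≤ Submodule.span ℝ (Set.range (Fin.snoc u un : Fin (n+1) → Euc d)) := by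
          rw [hU]
          apply Submodule.span_mono
          rintro y ⟨i', rfl⟩
          exact ⟨i'.castSucc, Fin.snoc_castSucc _ _ _⟩
        exact h10 (hspan_subv i)
    · intro j i hij
      have h12 : (i : ℕ) < (j : ℕ) := hij
      have h13 : (i : ℕ) < n := by have := j.2; omega
      obtain ⟨i', rfl⟩ : ∃ i' : Fin n, i'.castSucc = i :=
        ⟨i.castLT h13, Fin.castSucc_castLT i h13⟩
      rw [Fin.snoc_castSucc]
      induction j using Fin.lastCases with
      | last => rw [Fin.snoc_last]; exact hun_oldv _
      | cast j' =>
        rw [Fin.snoc_castSucc]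
        refine h4 j' _ ?_
        have h14 : (i' : ℕ) < (j' : ℕ) := by simpa using h12
        exact h14
    · intro j
      refine Fin.lastCases ?_ ?_ j
      · rw [Fin.snoc_last, Fin.snoc_last, hunvn]; exact hgw
      · intro i; rw [Fin.snoc_castSucc, Fin.snoc_castSucc]; exact h5 i

lemma stmt12_aux_det {d : ℕ} (v u : Fin d → Euc d) (hu : Orthonormal ℝ u)
    (htri : ∀ j i : Fin d, i < j → ⟪u j, v i⟫ = 0)
    {c : ℝ} (hc : 0 ≤ c) (hdiag : ∀ j, c ≤ ⟪u j, v j⟫) :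
    c ^ d ≤ |(Matrix.of fun i j => v j i).det| := by
  classical
  set M : Matrix (Fin d) (Fin d) ℝ := Matrix.of fun i j => v j i with hM
  set Uu : Matrix (Fin d) (Fin d) ℝ := Matrix.of fun i j => u j i with hUu
  have hinner : ∀ (x y : Euc d), ⟪x, y⟫ = ∑ i, x i * y i := by
    intro x y
    simp [PiLp.inner_apply, mul_comm]
  have hA : Uuᵀ * M = Matrix.of fun i j => ⟪u i, v j⟫ := by
    ext i j
    simp [Matrix.mul_apply, hM, hUu, Matrix.transpose_apply, hinner]
  have hAtri : (Matrix.of fun i j => (⟪u i, v j⟫ : ℝ)).BlockTriangular id := by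
    intro i j hij
    exact htri i j hij
  have hdetA : (Uuᵀ * M).det = ∏ i, ⟪u i, v i⟫ := by
    rw [hA, Matrix.det_of_upperTriangular hAtri]
    rfl
  have hUorth : Uuᵀ * Uu = 1 := by
    ext i j
    have h0 := orthonormal_iff_ite.1 hu i j
    rw [hinner] at h0
    simp only [Matrix.mul_apply, hUu, Matrix.transpose_apply, Matrix.of_apply, Matrix.one_apply]
    rw [← h0]
  have hdetU : |Uu.det| = 1 := by
    have h1 : Uu.det * Uu.det = 1 := by
      have := congrArg Matrix.det hUorth
      rwa [Matrix.det_mul, Matrix.det_transpose, Matrix.det_one] at this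
    rcases mul_self_eq_one_iff.1 h1 with h | h <;> rw [h] <;> norm_num
  have hdetM : |M.det| = |(Uuᵀ * M).det| := by
    rw [Matrix.det_mul, Matrix.det_transpose, abs_mul, hdetU, one_mul]
  rw [hdetM, hdetA]
  calc c ^ d = ∏ _i : Fin d, c := by simp
    _ ≤ ∏ i, ⟪u i, v i⟫ := Finset.prod_le_prod (fun _ _ => hc) (fun i _ => hdiag i)
    _ ≤ |∏ i, ⟪u i, v i⟫| := le_abs_self _

lemma stmt12_aux_vol {d : ℕ} (hd : 0 < d) {Q : Set (Euc d)} (hconv : Convex ℝ Q) {p₀ : Euc d}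
    (hp₀ : p₀ ∈ Q) (v : Fin d → Euc d) (hv : ∀ j, p₀ + v j ∈ Q) {c : ℝ} (hc : 0 ≤ c)
    (hdet : c ^ d ≤ |(Matrix.of fun i j => v j i).det|) :
    ENNReal.ofReal (c ^ d * (1 / (2 * d)) ^ d) * volume (ball (0 : Euc d) 1) ≤ volume Q := by
  classical
  have hd' : (0 : ℝ) < d := by exact_mod_cast hd
  set b := PiLp.basisFun 2 ℝ (Fin d) with hb
  set T : Euc d →ₗ[ℝ] Euc d := b.constr ℝ v with hTdef
  have hT : ∀ α : Euc d, T α = ∑ i, α i • v i := by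
    intro α
    rw [hTdef, Module.Basis.constr_apply_fintype]
    congr 1
  have hdetT : LinearMap.det T = (Matrix.of fun i j => v j i).det := by
    rw [← LinearMap.det_toMatrix b]
    congr 1
    ext i j
    rw [LinearMap.toMatrix_apply, hTdef, Module.Basis.constr_basis]
    simp [hb]
  set c₀ : Euc d := WithLp.toLp 2 (fun _ => 1 / (2 * d) : Fin d → ℝ) with hc₀
  set r : ℝ := 1 / (2 * d) with hr
  have hr0 : 0 < r := by positivity
  have hcoord : ∀ α : Euc d, α ∈ closedBall c₀ r → ∀ i, α i ∈ Icc (0:ℝ) (1/d) := by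
    intro α hα i
    have h1 : dist (α i) (c₀ i) ≤ dist α c₀ := by
      rw [EuclideanSpace.dist_eq]
      have h2 : dist (α i) (c₀ i) = Real.sqrt (dist (α i) (c₀ i) ^ 2) := by
        rw [Real.sqrt_sq dist_nonneg]
      rw [h2]
      apply Real.sqrt_le_sqrt
      exact Finset.single_le_sum (f := fun j => dist (α j) (c₀ j) ^ 2)
        (fun j _ => by positivity) (Finset.mem_univ i)
    have h3 : dist α c₀ ≤ r := mem_closedBall.1 hα
    have h4 : |α i - 1 / (2 * d)| ≤ r := by
      rw [← Real.dist_eq]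
      exact le_trans h1 h3
    rw [abs_le] at h4
    constructor
    · rw [hr] at h4; linarith [h4.1]
    · rw [hr] at h4
      have : α i ≤ 1 / (2 * d) + 1 / (2 * d) := by linarith [h4.2]
      calc α i ≤ 1 / (2 * d) + 1 / (2 * d) := this
        _ = 1 / d := by
          rw [← add_div]
          rw [show (1:ℝ) + 1 = 2 by norm_num]
          rw [div_mul_eq_div_div]
          norm_num
  have hsub : (fun y => p₀ + y) '' (T '' closedBall c₀ r) ⊆ Q := by
    rintro x ⟨y, ⟨α, hα, rfl⟩, rfl⟩
    have hcoords := hcoord α hα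
    have hnn : ∀ i, (0:ℝ) ≤ α i := fun i => (hcoords i).1
    have hsum : ∑ i, α i ≤ 1 := by
      calc ∑ i, α i ≤ ∑ _i : Fin d, (1/d : ℝ) :=
            Finset.sum_le_sum (fun i _ => (hcoords i).2)
        _ = d * (1/d) := by rw [Finset.sum_const]; simp [mul_comm]
        _ = 1 := by field_simp
    set W : Option (Fin d) → ℝ := fun o => o.elim (1 - ∑ i, α i) α with hW
    set z : Option (Fin d) → Euc d := fun o => o.elim p₀ (fun i => p₀ + v i) with hz
    have hmem : ∑ o : Option (Fin d), W o • z o ∈ Q := by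
      apply hconv.sum_mem
      · rintro (_ | i) _
        · simp [hW]; linarith
        · simpa [hW] using hnn i
      · rw [Fintype.sum_option]
        simp [hW]
      · rintro (_ | i) _
        · simpa [hz] using hp₀
        · simpa [hz] using hv i
    have heq : ∑ o : Option (Fin d), W o • z o = p₀ + T α := by
      rw [hT, Fintype.sum_option]
      simp only [hW, hz, Option.elim]
      have : ∑ i, α i • (p₀ + v i) = (∑ i, α i) • p₀ + ∑ i, α i • v i := by
        rw [Finset.sum_smul]
        rw [← Finset.sum_add_distrib]
        exact Finset.sum_congr rfl (fun i _ => smul_add _ _ _)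
      rw [this, sub_smul, one_smul]
      abel
    rwa [heq] at hmem
  calc ENNReal.ofReal (c ^ d * (1 / (2 * d)) ^ d) * volume (ball (0 : Euc d) 1)
      ≤ ENNReal.ofReal |LinearMap.det T| * (ENNReal.ofReal (r ^ d) * volume (ball (0 : Euc d) 1)) := by
        rw [← mul_assoc, ← ENNReal.ofReal_mul (by positivity)]
        apply mul_le_mul_left
        apply ENNReal.ofReal_le_ofReal
        have : c ^ d ≤ |LinearMap.det T| := by rw [hdetT]; exact hdet
        have hrd : (0:ℝ) ≤ r ^ d := by positivity
        calc c ^ d * (1 / (2 * d)) ^ d = c ^ d * r ^ d := by rw [hr]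
          _ ≤ |LinearMap.det T| * r ^ d := by
              apply mul_le_mul_of_nonneg_right this hrd
    _ = ENNReal.ofReal |LinearMap.det T| * volume (closedBall c₀ r) := by
        rw [Measure.addHaar_closedBall _ _ hr0.le, finrank_euclideanSpace_fin]
    _ = volume (T '' closedBall c₀ r) := (Measure.addHaar_image_linearMap _ _ _).symm
    _ = volume ((fun y => p₀ + y) '' (T '' closedBall c₀ r)) := by
        have himg : (fun y => p₀ + y) '' (T '' closedBall c₀ r)
            = p₀ +ᵥ (T '' closedBall c₀ r) := by
          rw [← Set.image_vadd]; rfl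
        rw [himg, measure_vadd]
    _ ≤ volume Q := measure_mono hsub


theorem stmt12 (d k : ℕ) (hd : 0 < d) (hk : 0 < k) :
    ∃ k' : ℤ, ∀ Q : Set (Euc d), Convex ℝ Q → IsShape Q →
      Metric.diam Q ≤ k * heightOf Q → IsFat (k' : ℝ) Q := by
  refine ⟨((4 * k * d : ℕ) ^ d : ℤ), ?_⟩
  intro Q hconv hshape haspect
  obtain ⟨hcomp, hspan⟩ := hshape
  have hd' : (0:ℝ) < d := by exact_mod_cast hd
  have hk' : (0:ℝ) < k := by exact_mod_cast hk
  -- Q nonempty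
  have hne : Q.Nonempty := by
    rcases Q.eq_empty_or_nonempty with h | h
    · exfalso; rw [h] at hspan; simp at hspan
    · exact h
  obtain ⟨p₀, hp₀⟩ := hne
  -- a second point
  obtain ⟨q, hq, hqp⟩ : ∃ q ∈ Q, q ≠ p₀ := by
    by_contra h
    push_neg at h
    have hsub : Q ⊆ {p₀} := fun y hy => h y hy
    have hle : (⊤ : AffineSubspace ℝ (Euc d)) ≤ affineSpan ℝ {p₀} := by
      rw [← hspan]; exact affineSpan_mono ℝ hsub
    have hmem : p₀ + EuclideanSpace.single ⟨0, hd⟩ (1:ℝ) ∈ affineSpan ℝ ({p₀} : Set (Euc d)) :=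
      hle (AffineSubspace.mem_top ℝ _ _)
    have h1 := (AffineSubspace.mem_affineSpan_singleton ℝ _).1 hmem
    have h2 : EuclideanSpace.single (⟨0, hd⟩ : Fin d) (1:ℝ) = 0 := by
      have := congrArg (fun z => z - p₀) h1
      simpa using this
    have h3 := congrFun (congrArg (fun f => (f.ofLp : Fin d → ℝ)) h2) ⟨0, hd⟩
    simp [EuclideanSpace.single_apply] at h3
  have hD0 : 0 < Metric.diam Q :=
    lt_of_lt_of_le (dist_pos.2 hqp) (Metric.dist_le_diam_of_mem hcomp.isBounded hq hp₀)
  have hw0 : 0 ≤ heightOf Q := Real.sInf_nonneg (fun _ hx => hx.1)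
  have hw : 0 < heightOf Q := by
    rcases eq_or_lt_of_le hw0 with h | h
    · exfalso
      rw [← h] at haspect
      simp at haspect
      linarith
    · exact h
  set w : ℝ := heightOf Q with hwdef
  set D : ℝ := Metric.diam Q with hDdef
  -- extent hypothesis
  have hext : ∀ u : Euc d, ‖u‖ = 1 → ∃ p ∈ Q, w / 2 ≤ |⟪u, p - p₀⟫| := by
    intro u hu
    obtain ⟨p, hp, q', hq', hbounds, hgt⟩ := stmt12_extent_ge hcomp ⟨p₀, hp₀⟩ hu
    rcases le_total (⟪u, p₀⟫ : ℝ) ((⟪u, p⟫ + ⟪u, q'⟫) / 2) with h | h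
    · refine ⟨q', hq', ?_⟩
      have h5 : w / 2 ≤ ⟪u, q'⟫ - ⟪u, p₀⟫ := by
        have := hgt
        linarith
      rw [inner_sub_right]
      exact le_trans h5 (le_abs_self _)
    · refine ⟨p, hp, ?_⟩
      have h5 : w / 2 ≤ ⟪u, p₀⟫ - ⟪u, p⟫ := by linarith
      rw [inner_sub_right]
      have h6 : (⟪u, p⟫ : ℝ) - ⟪u, p₀⟫ ≤ -(w/2) := by linarith
      calc w / 2 ≤ -((⟪u, p⟫ : ℝ) - ⟪u, p₀⟫) := by linarith
        _ ≤ |(⟪u, p⟫ : ℝ) - ⟪u, p₀⟫| := neg_le_abs _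
  obtain ⟨v, u, h1, h2, _, h4, h5⟩ := stmt12_aux_vecs hw hext d le_rfl
  have hdet := stmt12_aux_det v u h2 h4 (c := w / 2) (by positivity) h5
  have hvol := stmt12_aux_vol hd hconv hp₀ v h1 (by positivity) hdet
  -- fatness
  intro x hx ρ hρ
  rcases le_total D ρ with hcase | hcase
  · have hQB : Q ⊆ closedBall x ρ := fun y hy =>
      mem_closedBall.2 (le_trans (Metric.dist_le_diam_of_mem hcomp.isBounded hy hx) hcase)
    rw [inter_eq_self_of_subset_right hQB]
    exact min_le_right _ _
  · -- ρ ≤ D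
    set t : ℝ := ρ / D with htdef
    have ht0 : 0 < t := div_pos hρ hD0
    have ht1 : t ≤ 1 := (div_le_one hD0).2 hcase
    have hSsub : ((1 - t) • x) +ᵥ (t • Q) ⊆ closedBall x ρ ∩ Q := by
      rintro z ⟨b, ⟨y, hy, rfl⟩, rfl⟩
      constructor
      · show dist ((1 - t) • x + t • y) x ≤ ρ
        have h7 : (1 - t) • x + t • y - x = t • (y - x) := by
          rw [sub_smul, one_smul, smul_sub]; abel
        rw [dist_eq_norm, h7, norm_smul, Real.norm_eq_abs, abs_of_pos ht0]
        have h8 : ‖y - x‖ ≤ D := by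
          rw [← dist_eq_norm]
          exact Metric.dist_le_diam_of_mem hcomp.isBounded hy hx
        calc t * ‖y - x‖ ≤ t * D := by
              exact mul_le_mul_of_nonneg_left h8 ht0.le
          _ = ρ := by rw [htdef]; field_simp
      · show (1 - t) • x + t • y ∈ Q
        exact hconv hx hy (by linarith) ht0.le (by ring)
    have hSvol : volume (((1 - t) • x) +ᵥ (t • Q)) = ENNReal.ofReal (t ^ d) * volume Q := by
      rw [measure_vadd, Measure.addHaar_smul_of_nonneg _ ht0.le, finrank_euclideanSpace_fin]
    refine le_trans (min_le_left _ _) ?_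
    have hkey : volume (closedBall x ρ) / ENNReal.ofReal (((4 * k * d : ℕ) ^ d : ℤ) : ℝ)
        ≤ ENNReal.ofReal (t ^ d) * volume Q := by
      rw [Measure.addHaar_closedBall _ _ hρ.le, finrank_euclideanSpace_fin]
      have hcast : (((4 * k * d : ℕ) ^ d : ℤ) : ℝ) = ((4 * k * d : ℝ)) ^ d := by push_cast; ring
      rw [hcast]
      have hratio : ENNReal.ofReal (ρ ^ d) / ENNReal.ofReal ((4 * k * d : ℝ) ^ d)
          = ENNReal.ofReal (ρ ^ d / (4 * k * d : ℝ) ^ d) := by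
        rw [ENNReal.ofReal_div_of_pos (by positivity)]
      calc ENNReal.ofReal (ρ ^ d) * volume (ball (0 : Euc d) 1) / ENNReal.ofReal ((4 * k * d : ℝ) ^ d)
          = (ENNReal.ofReal (ρ ^ d) / ENNReal.ofReal ((4 * k * d : ℝ) ^ d)) * volume (ball (0 : Euc d) 1) := by
            rw [div_eq_mul_inv, div_eq_mul_inv, mul_right_comm]
        _ = ENNReal.ofReal (ρ ^ d / (4 * k * d : ℝ) ^ d) * volume (ball (0 : Euc d) 1) := by
            rw [hratio]
        _ ≤ ENNReal.ofReal (t ^ d * ((w/2) ^ d * (1 / (2 * d)) ^ d)) * volume (ball (0 : Euc d) 1) := by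
            apply mul_le_mul_left
            apply ENNReal.ofReal_le_ofReal
            have hbase : ρ / (4 * k * d) ≤ t * ((w/2) * (1 / (2 * d))) := by
              have hb1 : t * ((w/2) * (1 / (2 * d))) = (ρ * w) / (D * (4 * d)) := by
                rw [htdef]; field_simp; ring_nf
              rw [hb1, div_le_div_iff₀ (by positivity) (by positivity)]
              have hDkw : D ≤ k * w := haspect
              nlinarith [mul_le_mul_of_nonneg_left hDkw (by positivity : (0:ℝ) ≤ ρ * (4 * d))]
            calc ρ ^ d / (4 * k * d : ℝ) ^ d = (ρ / (4 * k * d)) ^ d := by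
                  rw [div_pow]
              _ ≤ (t * ((w/2) * (1 / (2 * d)))) ^ d := by
                  apply pow_le_pow_left₀ (by positivity) hbase
              _ = t ^ d * ((w/2) ^ d * (1 / (2 * d)) ^ d) := by
                  rw [mul_pow, mul_pow]
        _ = ENNReal.ofReal (t ^ d) * (ENNReal.ofReal ((w/2) ^ d * (1 / (2 * d)) ^ d) * volume (ball (0 : Euc d) 1)) := by
            rw [ENNReal.ofReal_mul (by positivity : (0:ℝ) ≤ t ^ d), mul_assoc]
        _ ≤ ENNReal.ofReal (t ^ d) * volume Q := by
            exact mul_le_mul_right hvol _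
    refine le_trans hkey ?_
    rw [← hSvol]
    exact measure_mono hSsub
end

section
/- Let 𝓑 be a finite set of non-empty boxes in ℝ^d with |𝓑| = n, and let k be a positive integer. Then either (i) there exist a subset 𝓑' ⊆ 𝓑 with |𝓑'| = k and an index i ∈ {1,…,d} such that the projections {π_i(B)}_{B ∈ 𝓑'} onto the i-th coordinate axis are pairwise disjoint, or (ii) there exists a subset 𝓑' ⊆ 𝓑 with |𝓑'| ≥ n/k^d such that ∩_{B ∈ 𝓑'} B ≠ ∅. -/
open MeasureTheory Set Pointwise Metric Function
open scoped RealInnerProductSpace ENNReal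

section Aux
attribute [local instance] Classical.propDecidable

/-- Helly-type greedy lemma for intervals: either `k+1` pairwise disjoint intervals
or a piercing set of at most `k` points. -/
theorem intervalAlt {α : Type*} [DecidableEq α] (k : ℕ) (F : Finset α) (f g : α → ℝ)
    (hfg : ∀ x ∈ F, f x ≤ g x) :
    (∃ F' ⊆ F, F'.card = k + 1 ∧ (F' : Set α).Pairwise fun x y =>
      Disjoint (Set.Icc (f x) (g x)) (Set.Icc (f y) (g y))) ∨
    (∃ P : Finset ℝ, P.card ≤ k ∧ ∀ x ∈ F, ∃ p ∈ P, p ∈ Set.Icc (f x) (g x)) := by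
  induction k generalizing F with
  | zero =>
    rcases F.eq_empty_or_nonempty with rfl | hne
    · exact Or.inr ⟨∅, le_rfl, by simp⟩
    · obtain ⟨x₀, hx₀⟩ := hne
      exact Or.inl ⟨{x₀}, Finset.singleton_subset_iff.2 hx₀, rfl, by simp⟩
  | succ k ih =>
    rcases F.eq_empty_or_nonempty with rfl | hne
    · exact Or.inr ⟨∅, by simp, by simp⟩
    obtain ⟨x₀, hx₀F, hx₀⟩ := F.exists_min_image g hne
    set m := g x₀ with hm
    set F₁ := F.filter (fun x => m < f x) with hF₁
    have hF₁sub : F₁ ⊆ F := Finset.filter_subset _ _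
    rcases ih F₁ (fun x hx => hfg x (hF₁sub hx)) with ⟨F', hsub, hcard, hpw⟩ | ⟨P, hPcard, hP⟩
    · left
      have hx₀notin : x₀ ∉ F' := by
        intro h
        have := (Finset.mem_filter.1 (hsub h)).2
        exact absurd (hfg x₀ hx₀F) (not_le.2 this)
      refine ⟨insert x₀ F', Finset.insert_subset hx₀F (hsub.trans hF₁sub), ?_, ?_⟩
      · rw [Finset.card_insert_of_notMem hx₀notin, hcard]
      · have hdisj : ∀ y ∈ F', Disjoint (Set.Icc (f x₀) (g x₀)) (Set.Icc (f y) (g y)) := by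
          intro y hy
          have hmy : m < f y := (Finset.mem_filter.1 (hsub hy)).2
          rw [Set.disjoint_left]
          rintro z ⟨-, hz2⟩ ⟨hz3, -⟩
          exact absurd (hz2.trans_lt hmy) (not_lt.2 hz3)
        rw [Finset.coe_insert]
        rw [Set.pairwise_insert]
        exact ⟨hpw, fun y hy _ => ⟨hdisj y hy, (hdisj y hy).symm⟩⟩
    · right
      refine ⟨insert m P, (Finset.card_insert_le _ _).trans (by omega), ?_⟩
      intro x hxF
      by_cases hx : m < f x
      · obtain ⟨p, hp, hp2⟩ := hP x (Finset.mem_filter.2 ⟨hxF, hx⟩)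
        exact ⟨p, Finset.mem_insert_of_mem hp, hp2⟩
      · exact ⟨m, Finset.mem_insert_self _ _, not_lt.1 hx, hx₀ x hxF⟩

/-- A choice of lower endpoints for a box. -/
noncomputable def aF {d : ℕ} (B : Set (Euc d)) : Fin d → ℝ :=
  if h : IsBox B then h.choose else 0

/-- A choice of upper endpoints for a box. -/
noncomputable def bF {d : ℕ} (B : Set (Euc d)) : Fin d → ℝ :=
  if h : IsBox B then h.choose_spec.choose else 0

theorem box_eq {d : ℕ} {B : Set (Euc d)} (h : IsBox B) :
    B = {x : Euc d | ∀ i, x i ∈ Set.Icc (aF B i) (bF B i)} := by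
  rw [aF, bF, dif_pos h, dif_pos h]
  exact h.choose_spec.choose_spec

end Aux

theorem stmt15 (d : ℕ) (hd : 0 < d) (𝓑 : Finset (Set (Euc d)))
    (hbox : ∀ B ∈ 𝓑, IsBox B ∧ B.Nonempty) (n : ℕ) (hn : 𝓑.card = n)
    (k : ℕ) (hk : 0 < k) :
    (∃ 𝓑' ⊆ 𝓑, 𝓑'.card = k ∧ ∃ i : Fin d,
      (𝓑' : Set (Set (Euc d))).Pairwise fun B B' =>
        Disjoint ((fun x : Euc d => x i) '' B) ((fun x : Euc d => x i) '' B')) ∨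
    (∃ 𝓑' ⊆ 𝓑, (n : ℝ) / (k : ℝ) ^ d ≤ 𝓑'.card ∧ (⋂ B ∈ 𝓑', (B : Set (Euc d))).Nonempty) := by
  classical
  -- dispose of the empty case
  rcases 𝓑.eq_empty_or_nonempty with rfl | h𝓑ne
  · refine Or.inr ⟨∅, by simp, ?_, by simp⟩
    have : n = 0 := by simpa using hn.symm
    simp [this]
  -- basic facts about the chosen endpoints
  have hmemIcc : ∀ B ∈ 𝓑, ∀ x ∈ B, ∀ i, x i ∈ Set.Icc (aF B i) (bF B i) := by
    intro B hB x hx i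
    have := box_eq (hbox B hB).1
    rw [this] at hx
    exact hx i
  have hle : ∀ B ∈ 𝓑, ∀ i, aF B i ≤ bF B i := by
    intro B hB i
    obtain ⟨x, hx⟩ := (hbox B hB).2
    obtain ⟨h1, h2⟩ := hmemIcc B hB x hx i
    exact h1.trans h2
  -- apply the interval alternative in each direction
  by_cases hL : ∃ i : Fin d, ∃ F' ⊆ 𝓑, F'.card = k ∧ (F' : Set (Set (Euc d))).Pairwise
      fun B B' => Disjoint (Set.Icc (aF B i) (bF B i)) (Set.Icc (aF B' i) (bF B' i))
  · obtain ⟨i, F', hsub, hcard, hpw⟩ := hL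
    refine Or.inl ⟨F', hsub, hcard, i, ?_⟩
    intro B hB B' hB' hne
    have himg : ∀ C, C ∈ F' → (fun x : Euc d => x i) '' C ⊆ Set.Icc (aF C i) (bF C i) := by
      rintro C hC - ⟨x, hx, rfl⟩
      exact hmemIcc C (hsub hC) x hx i
    exact (hpw hB hB' hne).mono (himg B hB) (himg B' hB')
  -- otherwise, every direction admits a small piercing set
  push_neg at hL
  have hR : ∀ i : Fin d, ∃ P : Finset ℝ, P.card ≤ k - 1 ∧
      ∀ B ∈ 𝓑, ∃ p ∈ P, p ∈ Set.Icc (aF B i) (bF B i) := by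
    intro i
    rcases intervalAlt (k - 1) 𝓑 (fun B => aF B i) (fun B => bF B i)
      (fun B hB => hle B hB i) with ⟨F', hsub, hcard, hpw⟩ | hr
    · exfalso
      have : k - 1 + 1 = k := Nat.succ_pred_eq_of_pos hk
      exact hL i F' hsub (by omega) hpw
    · exact hr
  choose P hPcard hP using hR
  -- assign to each box a piercing point in each direction
  have hc : ∀ B : Set (Euc d), ∀ i : Fin d, ∃ p : ℝ,
      B ∈ 𝓑 → p ∈ P i ∧ p ∈ Set.Icc (aF B i) (bF B i) := by
    intro B i
    by_cases hB : B ∈ 𝓑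
    · obtain ⟨p, hp1, hp2⟩ := hP i B hB
      exact ⟨p, fun _ => ⟨hp1, hp2⟩⟩
    · exact ⟨0, fun h => absurd h hB⟩
  choose c hc using hc
  -- pigeonhole over the fibers of `c`
  set t : Finset (Fin d → ℝ) := 𝓑.image c with ht
  have htne : t.Nonempty := h𝓑ne.image c
  have hsum : 𝓑.card = ∑ p ∈ t, (𝓑.filter fun B => c B = p).card :=
    Finset.card_eq_sum_card_fiberwise (fun B hB => Finset.mem_image_of_mem c hB)
  obtain ⟨pmax, hpmaxt, hpmax⟩ := t.exists_max_image
    (fun p => (𝓑.filter fun B => c B = p).card) htne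
  set M := (𝓑.filter fun B => c B = pmax).card with hM
  have hnle : n ≤ t.card * M := by
    calc n = ∑ p ∈ t, (𝓑.filter fun B => c B = p).card := by rw [← hn, hsum]
    _ ≤ ∑ _p ∈ t, M := Finset.sum_le_sum fun p hp => hpmax p hp
    _ = t.card * M := by rw [Finset.sum_const, smul_eq_mul]
  have htcard : t.card ≤ k ^ d := by
    have hsub : t ⊆ Fintype.piFinset (fun i => P i) := by
      intro p hp
      obtain ⟨B, hB, rfl⟩ := Finset.mem_image.1 hp
      exact Fintype.mem_piFinset.2 fun i => (hc B i hB).1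
    calc t.card ≤ (Fintype.piFinset (fun i => P i)).card := Finset.card_le_card hsub
    _ = ∏ i : Fin d, (P i).card := Fintype.card_piFinset _
    _ ≤ ∏ _i : Fin d, k := Finset.prod_le_prod' fun i _ => (hPcard i).trans (Nat.sub_le _ _)
    _ = k ^ d := by simp [Finset.prod_const]
  refine Or.inr ⟨𝓑.filter (fun B => c B = pmax), Finset.filter_subset _ _, ?_, ?_⟩
  · rw [div_le_iff₀ (by positivity)]
    have : (n : ℝ) ≤ (k ^ d : ℕ) * (M : ℝ) := by
      have h1 : n ≤ k ^ d * M := hnle.trans (Nat.mul_le_mul_right M htcard)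
      exact_mod_cast h1
    calc (n : ℝ) ≤ (k ^ d : ℕ) * (M : ℝ) := this
    _ = (M : ℝ) * (k : ℝ) ^ d := by push_cast; ring
  · refine ⟨(WithLp.equiv 2 (Fin d → ℝ)).symm pmax, ?_⟩
    rw [Set.mem_iInter₂]
    intro B hB
    obtain ⟨hB𝓑, hcB⟩ := Finset.mem_filter.1 hB
    rw [box_eq (hbox B hB𝓑).1]
    intro i
    have := (hc B i hB𝓑).2
    rw [hcB] at this
    exact this
end
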